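/- Let N ≥ 1, j = N/2, and let U_j⁺ : ℂ^(N+2) → ℂ^(N+1) ⊗ ℂ² be the isometry U_j⁺ |m + ½⟩' := √((j+m+1)/(2j+1)) |m⟩ ⊗ e₁ + √((j−m)/(2j+1)) |m+1⟩ ⊗ e₂ (m = −j−1, …, j; vanishing-coefficient terms omitted). Define η_N⁺ : M_(N+1)(ℂ) → M_(N+2)(ℂ) by η_N⁺(a) := (U_j⁺)* (a ⊗ 1₂) U_j⁺. Then for every a ∈ M_(N+1)(ℂ) and every (φ, θ): (i) ψ^{N+1}_(φ,θ)(η_N⁺(a)) = ψ^N_(φ,θ)(a); and (ii) ‖[D_{N+1}, η_N⁺(a) ⊗ 1₂]‖ ≤ ‖[D_N, a ⊗ 1₂]‖. -/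

import Mathlib

noncomputable section
open Matrix

/-- The diagonal matrix `H` with `H|m⟩ = m|m⟩`, `m = i - N/2` for index `i : Fin (N+1)`. -/
def Hmat (N : ℕ) : Matrix (Fin (N + 1)) (Fin (N + 1)) ℂ :=
  Matrix.diagonal fun i => (i : ℂ) - (N : ℂ) / 2

/-- The raising operator `E` with `E|m⟩ = √((j-m)(j+m+1)) |m+1⟩`, `j = N/2`. -/
def Emat (N : ℕ) : Matrix (Fin (N + 1)) (Fin (N + 1)) ℂ := fun p q =>
  if (p : ℕ) = (q : ℕ) + 1 then (Real.sqrt ((N - (q : ℕ)) * ((q : ℕ) + 1)) : ℂ) else 0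

def Fmat (N : ℕ) : Matrix (Fin (N + 1)) (Fin (N + 1)) ℂ := (Emat N)ᴴ

/-- The Dirac operator `D_N = [[1+H, F], [E, 1-H]]` in block form on `ℂ^(N+1) ⊗ ℂ²`. -/
def DiracOp (N : ℕ) :
    Matrix (Fin (N + 1) ⊕ Fin (N + 1)) (Fin (N + 1) ⊕ Fin (N + 1)) ℂ :=
  Matrix.fromBlocks (1 + Hmat N) (Fmat N) (Emat N) (1 - Hmat N)

/-- `a ⊗ 1₂` in block form. -/
def tensorOne (N : ℕ) (a : Matrix (Fin (N + 1)) (Fin (N + 1)) ℂ) :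
    Matrix (Fin (N + 1) ⊕ Fin (N + 1)) (Fin (N + 1) ⊕ Fin (N + 1)) ℂ :=
  Matrix.fromBlocks a 0 0 a

/-- The operator norm of a square complex matrix, acting on Euclidean space. -/
def opNorm {n : Type*} [Fintype n] [DecidableEq n] (M : Matrix n n ℂ) : ℝ :=
  ‖Matrix.toEuclideanCLM (𝕜 := ℂ) M‖

/-- The Bloch coherent state vector `|φ,θ⟩_N`, with component at index `i` (i.e. `m = i − N/2`)
equal to `C(N, i)^(1/2) e^(−i m φ) (sin(θ/2))^(N/2+m) (cos(θ/2))^(N/2−m)`. -/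
def blochVec (N : ℕ) (φ θ : ℝ) : Fin (N + 1) → ℂ := fun i =>
  (Real.sqrt (N.choose i) : ℂ) * Complex.exp (-Complex.I * ((i : ℂ) - (N : ℂ) / 2) * (φ : ℂ)) *
    (Real.sin (θ / 2) : ℂ) ^ (i : ℕ) * (Real.cos (θ / 2) : ℂ) ^ (N - (i : ℕ))

/-- The Bloch coherent state `ψ^N_(φ,θ)(a) = ⟨φ,θ| a |φ,θ⟩_N`. -/
def psiState (N : ℕ) (a : Matrix (Fin (N + 1)) (Fin (N + 1)) ℂ) (φ θ : ℝ) : ℂ :=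
  star (blochVec N φ θ) ⬝ᵥ a.mulVec (blochVec N φ θ)

/-- The isometry `U_j⁺ : ℂ^(N+2) → ℂ^(N+1) ⊗ ℂ²` (`j = N/2`), defined on the basis by
`U_j⁺ |m+½⟩' = √((j+m+1)/(2j+1)) |m⟩⊗e₁ + √((j−m)/(2j+1)) |m+1⟩⊗e₂`, written as a matrix;
the column index `k = m + j + 1 ∈ {0, …, N+1}`, the `inl` row index is the `⊗e₁` component
and the `inr` row index the `⊗e₂` component. -/
def Uplus (N : ℕ) : Matrix (Fin (N + 1) ⊕ Fin (N + 1)) (Fin (N + 2)) ℂ := fun r k =>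
  Sum.elim
    (fun i : Fin (N + 1) =>
      if (i : ℕ) + 1 = (k : ℕ) then (Real.sqrt ((k : ℝ) / (N + 1)) : ℂ) else 0)
    (fun i : Fin (N + 1) =>
      if (i : ℕ) = (k : ℕ) then (Real.sqrt (((N : ℝ) + 1 - (k : ℕ)) / (N + 1)) : ℂ) else 0) r

/-- The map `η_N⁺ : M_(N+1)(ℂ) → M_(N+2)(ℂ)`, `η_N⁺(a) = (U_j⁺)* (a ⊗ 1₂) U_j⁺`. -/
def etaPlus (N : ℕ) (a : Matrix (Fin (N + 1)) (Fin (N + 1)) ℂ) :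
    Matrix (Fin (N + 2)) (Fin (N + 2)) ℂ :=
  (Uplus N)ᴴ * tensorOne N a * Uplus N
section Aux
open Matrix Complex

namespace EtaAux

/-! ### Finite sum helpers -/

lemma star_ite (P : Prop) [Decidable P] (x : ℂ) :
    star (if P then x else 0) = if P then star x else 0 := by
  split_ifs <;> simp

lemma sumA {n : ℕ} (f : Fin n → ℂ) (m : ℕ) :
    (∑ q : Fin n, if (q : ℕ) = m then f q else 0) = if h : m < n then f ⟨m, h⟩ else 0 := by
  split_ifs with h
  · rw [Finset.sum_eq_single (⟨m, h⟩ : Fin n)]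
    · simp
    · intro b _ hb
      exact if_neg fun hbm => hb (Fin.ext hbm)
    · intro hm; exact absurd (Finset.mem_univ _) hm
  · refine Finset.sum_eq_zero fun q _ => if_neg fun hq => h ?_
    rw [← hq]; exact q.isLt

lemma sumB {n : ℕ} (f : Fin n → ℂ) (m : ℕ) :
    (∑ q : Fin n, if (q : ℕ) + 1 = m then f q else 0) =
      if h : 1 ≤ m ∧ m - 1 < n then f ⟨m - 1, h.2⟩ else 0 := by
  split_ifs with h
  · rw [Finset.sum_eq_single (⟨m - 1, h.2⟩ : Fin n)]
    · rw [if_pos]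
      show m - 1 + 1 = m
      omega
    · intro b _ hb
      refine if_neg fun hbm => hb (Fin.ext ?_)
      show (b : ℕ) = m - 1
      omega
    · intro hm; exact absurd (Finset.mem_univ _) hm
  · refine Finset.sum_eq_zero fun q _ => if_neg fun hq => h ?_
    have := q.isLt
    omega

/-! ### real sqrt identities -/

lemma sqrt_mul_sqrt_eq {a b c : ℝ} (ha : 0 ≤ a) (hb : 0 ≤ b) (habc : a * b = c) :
    Real.sqrt a * Real.sqrt b = Real.sqrt c := by
  rw [← Real.sqrt_mul ha, habc]

lemma S1 (n x : ℝ) (h0 : 0 ≤ x) (h1 : x ≤ n + 1) (hn : 0 ≤ n) :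
    Real.sqrt (x / (n + 1)) * Real.sqrt (x / (n + 1)) +
      Real.sqrt ((n + 1 - x) / (n + 1)) * Real.sqrt ((n + 1 - x) / (n + 1)) = 1 := by
  rw [Real.mul_self_sqrt (by apply div_nonneg <;> linarith),
    Real.mul_self_sqrt (by apply div_nonneg <;> linarith), ← add_div,
    show x + (n + 1 - x) = n + 1 by ring, div_self (by linarith)]

lemma S3a (n x : ℝ) (h0 : 1 ≤ x) (h1 : x ≤ n + 1) :
    Real.sqrt ((n - (x - 1)) * (x - 1 + 1)) * Real.sqrt (x / (n + 1)) +
      Real.sqrt ((n + 1 - x) / (n + 1)) =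
    Real.sqrt ((x + 1) / (n + 1)) * Real.sqrt ((n + 1 - x) * (x + 1)) := by
  have hn : (0:ℝ) < n + 1 := by linarith
  have e1 : Real.sqrt ((n - (x - 1)) * (x - 1 + 1)) * Real.sqrt (x / (n + 1)) =
      x * Real.sqrt ((n + 1 - x) / (n + 1)) := by
    rw [← Real.sqrt_mul (by nlinarith),
      show (n - (x - 1)) * (x - 1 + 1) * (x / (n + 1)) = x ^ 2 * ((n + 1 - x) / (n + 1)) by
        field_simp; ring,
      Real.sqrt_mul (sq_nonneg x), Real.sqrt_sq (by linarith)]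
  have e2 : Real.sqrt ((x + 1) / (n + 1)) * Real.sqrt ((n + 1 - x) * (x + 1)) =
      (x + 1) * Real.sqrt ((n + 1 - x) / (n + 1)) := by
    rw [← Real.sqrt_mul (by apply div_nonneg <;> linarith),
      show (x + 1) / (n + 1) * ((n + 1 - x) * (x + 1)) = (x + 1) ^ 2 * ((n + 1 - x) / (n + 1)) by
        field_simp,
      Real.sqrt_mul (sq_nonneg _), Real.sqrt_sq (by linarith)]
  rw [e1, e2]; ring

lemma S3az (n : ℝ) (hn : 0 ≤ n) :
    Real.sqrt ((n + 1 - 0) / (n + 1)) =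
      Real.sqrt (1 / (n + 1)) * Real.sqrt ((n + 1 - 0) * (0 + 1)) := by
  rw [← Real.sqrt_mul (by apply div_nonneg <;> linarith)]
  congr 1
  field_simp
  ring

lemma S3b (n x : ℝ) (h0 : 0 ≤ x) (h1 : x ≤ n) :
    Real.sqrt ((n - x) * (x + 1)) * Real.sqrt ((n + 1 - x) / (n + 1)) =
      Real.sqrt ((n + 1 - (x + 1)) / (n + 1)) * Real.sqrt ((n + 1 - x) * (x + 1)) := by
  rw [← Real.sqrt_mul (by nlinarith),
    ← Real.sqrt_mul (by apply div_nonneg <;> linarith)]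
  congr 1
  have hn : n + 1 ≠ 0 := ne_of_gt (by linarith)
  field_simp
  ring

lemma S4a (n x : ℝ) (h0 : 0 ≤ x) (h1 : x ≤ n) :
    Real.sqrt ((n - x) * (x + 1)) * Real.sqrt ((x + 1 + 1) / (n + 1)) =
      Real.sqrt ((x + 1) / (n + 1)) * Real.sqrt ((n + 1 - (x + 1)) * (x + 1 + 1)) := by
  rw [← Real.sqrt_mul (by nlinarith),
    ← Real.sqrt_mul (by apply div_nonneg <;> linarith)]
  congr 1
  have hn : n + 1 ≠ 0 := ne_of_gt (by linarith)
  field_simp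
  ring

lemma S4b (n x : ℝ) (h0 : 0 ≤ x) (h1 : x ≤ n) :
    Real.sqrt ((x + 1) / (n + 1)) +
      Real.sqrt ((n - x) * (x + 1)) * Real.sqrt ((n + 1 - (x + 1)) / (n + 1)) =
    Real.sqrt ((n + 1 - x) / (n + 1)) * Real.sqrt ((n + 1 - x) * (x + 1)) := by
  have e1 : Real.sqrt ((n - x) * (x + 1)) * Real.sqrt ((n + 1 - (x + 1)) / (n + 1)) =
      (n - x) * Real.sqrt ((x + 1) / (n + 1)) := by
    rw [← Real.sqrt_mul (by nlinarith),
      show (n - x) * (x + 1) * ((n + 1 - (x + 1)) / (n + 1)) =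
        (n - x) ^ 2 * ((x + 1) / (n + 1)) by field_simp; ring,
      Real.sqrt_mul (sq_nonneg _), Real.sqrt_sq (by linarith)]
  have e2 : Real.sqrt ((n + 1 - x) / (n + 1)) * Real.sqrt ((n + 1 - x) * (x + 1)) =
      (n + 1 - x) * Real.sqrt ((x + 1) / (n + 1)) := by
    rw [← Real.sqrt_mul (by apply div_nonneg <;> linarith),
      show (n + 1 - x) / (n + 1) * ((n + 1 - x) * (x + 1)) =
        (n + 1 - x) ^ 2 * ((x + 1) / (n + 1)) by field_simp,
      Real.sqrt_mul (sq_nonneg _), Real.sqrt_sq (by linarith)]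
  rw [e1, e2]; ring

lemma S4bz (n : ℝ) (h0 : 0 ≤ n) :
    Real.sqrt ((n + 1) / (n + 1)) =
      Real.sqrt ((n + 1 - n) / (n + 1)) * Real.sqrt ((n + 1 - n) * (n + 1)) := by
  rw [← Real.sqrt_mul (by apply div_nonneg <;> linarith)]
  congr 1
  rw [show n + 1 - n = (1:ℝ) by ring]
  field_simp

end EtaAux
end Aux
section Aux2
open Matrix Complex
namespace EtaAux

/-- top block of `Uplus` -/
def Vt (N : ℕ) : Matrix (Fin (N + 1)) (Fin (N + 2)) ℂ := fun i k =>
  if (i : ℕ) + 1 = (k : ℕ) then (Real.sqrt ((k : ℝ) / (N + 1)) : ℂ) else 0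

/-- bottom block of `Uplus` -/
def Vb (N : ℕ) : Matrix (Fin (N + 1)) (Fin (N + 2)) ℂ := fun i k =>
  if (i : ℕ) = (k : ℕ) then (Real.sqrt (((N : ℝ) + 1 - (k : ℕ)) / (N + 1)) : ℂ) else 0

lemma Uplus_eq (N : ℕ) : Uplus N = fromRows (Vt N) (Vb N) := by
  ext r k
  cases r <;> rfl

lemma VtVb_iso (N : ℕ) : (Vt N)ᴴ * Vt N + (Vb N)ᴴ * Vb N = 1 := by
  ext k k'
  rw [Matrix.add_apply, Matrix.mul_apply, Matrix.mul_apply]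
  simp only [conjTranspose_apply, Vt, Vb, star_ite, star_zero, RCLike.star_def,
    Complex.conj_ofReal, ite_zero_mul_ite_zero]
  by_cases hkk : k = k'
  · subst hkk
    simp only [and_self]
    rw [sumB, sumA, Matrix.one_apply_eq]
    have hk2 := k.isLt
    have hNk : ((k : ℕ) : ℝ) ≤ (N : ℝ) + 1 := by exact_mod_cast Nat.lt_succ_iff.mp hk2
    have hk0 : (0:ℝ) ≤ ((k : ℕ) : ℝ) := Nat.cast_nonneg _
    split_ifs with h1 h2 h2
    · rw [← Complex.ofReal_mul, ← Complex.ofReal_mul, ← Complex.ofReal_add,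
        S1 (N : ℝ) ((k:ℕ) : ℝ) hk0 hNk (Nat.cast_nonneg _)]
      exact Complex.ofReal_one
    · have hk : ((k : ℕ) : ℝ) = (N : ℝ) + 1 := by exact_mod_cast (by omega : (k:ℕ) = N + 1)
      rw [add_zero, ← Complex.ofReal_mul, Real.mul_self_sqrt (by positivity), hk,
        div_self (by positivity)]
      exact Complex.ofReal_one
    · have hk : ((k : ℕ) : ℝ) = 0 := by exact_mod_cast (by omega : (k:ℕ) = 0)
      rw [zero_add, ← Complex.ofReal_mul, Real.mul_self_sqrt
          (by apply div_nonneg <;> linarith), hk, sub_zero, div_self (by positivity)]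
      exact Complex.ofReal_one
    · omega
  · rw [Matrix.one_apply_ne hkk]
    have hne : (k : ℕ) ≠ (k' : ℕ) := fun hh => hkk (Fin.ext hh)
    rw [Finset.sum_eq_zero fun q _ => if_neg (by omega),
      Finset.sum_eq_zero fun q _ => if_neg (by omega), add_zero]

lemma diag_half_add (N : ℕ) :
    Hmat N + (1/2 : ℂ) • 1 = diagonal (fun i : Fin (N+1) => (i : ℂ) - (N : ℂ) / 2 + 1/2) := by
  ext i j
  rcases eq_or_ne i j with h | h
  · subst h
    simp only [Hmat, Matrix.add_apply, Matrix.smul_apply, Matrix.one_apply_eq,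
      Matrix.diagonal_apply_eq, smul_eq_mul, mul_one]
  · simp only [Hmat, Matrix.add_apply, Matrix.smul_apply, Matrix.one_apply_ne h,
      Matrix.diagonal_apply_ne _ h, smul_eq_mul, mul_zero, add_zero]

lemma diag_half_sub (N : ℕ) :
    Hmat N - (1/2 : ℂ) • 1 = diagonal (fun i : Fin (N+1) => (i : ℂ) - (N : ℂ) / 2 - 1/2) := by
  ext i j
  rcases eq_or_ne i j with h | h
  · subst h
    simp only [Hmat, Matrix.sub_apply, Matrix.smul_apply, Matrix.one_apply_eq,
      Matrix.diagonal_apply_eq, smul_eq_mul, mul_one]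
  · simp only [Hmat, Matrix.sub_apply, Matrix.smul_apply, Matrix.one_apply_ne h,
      Matrix.diagonal_apply_ne _ h, smul_eq_mul, mul_zero, sub_zero]

lemma hJt (N : ℕ) : (Hmat N + (1/2 : ℂ) • 1) * Vt N = Vt N * Hmat (N + 1) := by
  rw [diag_half_add]
  ext i k
  rw [Hmat, Matrix.diagonal_mul, Matrix.mul_diagonal]
  simp only [Vt, ite_mul, mul_ite, zero_mul, mul_zero]
  split_ifs with h
  · have hk : ((k : ℕ) : ℂ) = (i : ℕ) + 1 := by exact_mod_cast h.symm
    rw [hk]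
    push_cast
    ring
  · rfl

lemma hJb (N : ℕ) : (Hmat N - (1/2 : ℂ) • 1) * Vb N = Vb N * Hmat (N + 1) := by
  rw [diag_half_sub]
  ext i k
  rw [Hmat, Matrix.diagonal_mul, Matrix.mul_diagonal]
  simp only [Vb, ite_mul, mul_ite, zero_mul, mul_zero]
  split_ifs with h
  · have hk : ((k : ℕ) : ℂ) = (i : ℕ) := by exact_mod_cast h.symm
    rw [hk]
    push_cast
    ring
  · rfl

lemma hEt (N : ℕ) : Emat N * Vt N + Vb N = Vt N * Emat (N + 1) := by
  ext i k
  rw [Matrix.add_apply, Matrix.mul_apply, Matrix.mul_apply]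
  simp only [Emat, Vt, Vb, ite_zero_mul_ite_zero]
  have hi2 := i.isLt
  have hk2 := k.isLt
  simp only [show ∀ q : Fin (N+1), ((i:ℕ) = (q:ℕ)+1 ∧ (q:ℕ)+1 = (k:ℕ)) ↔
      ((q:ℕ)+1 = (i:ℕ) ∧ (i:ℕ) = (k:ℕ)) from fun q => by omega,
    show ∀ q : Fin (N+2), ((i:ℕ)+1 = (q:ℕ) ∧ (q:ℕ) = (k:ℕ)+1) ↔
      ((q:ℕ) = (i:ℕ)+1 ∧ (i:ℕ) = (k:ℕ)) from fun q => by omega, ite_and]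
  rw [sumB, sumA, dif_pos (show (i:ℕ)+1 < N+2 by omega)]
  by_cases hik : (i:ℕ) = (k:ℕ)
  · simp only [hik, eq_self_iff_true, if_true]
    by_cases h1 : 1 ≤ (k:ℕ)
    · rw [dif_pos ⟨h1, by omega⟩]
      have hx1 : (1:ℝ) ≤ ((k:ℕ):ℝ) := by exact_mod_cast h1
      have hx2 : ((k:ℕ):ℝ) ≤ (N:ℝ) + 1 := by exact_mod_cast (by omega : (k:ℕ) ≤ N+1)
      push_cast [Nat.cast_sub h1]
      exact_mod_cast S3a (N:ℝ) ((k:ℕ):ℝ) hx1 hx2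
    · rw [dif_neg (by omega), zero_add]
      have h0 : (k:ℕ) = 0 := by omega
      simp only [h0]
      push_cast
      exact_mod_cast S3az (N:ℝ) (Nat.cast_nonneg _)
  · simp only [if_neg hik]
    split_ifs <;> simp

lemma hEb (N : ℕ) : Emat N * Vb N = Vb N * Emat (N + 1) := by
  ext i k
  rw [Matrix.mul_apply, Matrix.mul_apply]
  simp only [Emat, Vb, ite_zero_mul_ite_zero]
  have hi2 := i.isLt
  have hk2 := k.isLt
  simp only [show ∀ q : Fin (N+1), ((i:ℕ) = (q:ℕ)+1 ∧ (q:ℕ) = (k:ℕ)) ↔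
      ((q:ℕ) = (k:ℕ) ∧ (i:ℕ) = (k:ℕ)+1) from fun q => by omega,
    show ∀ q : Fin (N+2), ((i:ℕ) = (q:ℕ) ∧ (q:ℕ) = (k:ℕ)+1) ↔
      ((q:ℕ) = (k:ℕ)+1 ∧ (i:ℕ) = (k:ℕ)+1) from fun q => by omega, ite_and]
  rw [sumA, sumA]
  by_cases hik : (i:ℕ) = (k:ℕ)+1
  · rw [dif_pos (show (k:ℕ) < N+1 by omega), dif_pos (show (k:ℕ)+1 < N+2 by omega),
      if_pos hik, if_pos hik]
    have hx2 : ((k:ℕ):ℝ) ≤ (N:ℝ) := by exact_mod_cast (by omega : (k:ℕ) ≤ N)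
    push_cast
    exact_mod_cast S3b (N:ℝ) ((k:ℕ):ℝ) (Nat.cast_nonneg _) hx2
  · split_ifs <;> simp [hik]

lemma hFt (N : ℕ) : Fmat N * Vt N = Vt N * Fmat (N + 1) := by
  ext i k
  rw [Matrix.mul_apply, Matrix.mul_apply]
  simp only [Fmat, conjTranspose_apply, Emat, Vt, star_ite, star_zero, RCLike.star_def,
    Complex.conj_ofReal, ite_zero_mul_ite_zero]
  have hi2 := i.isLt
  have hk2 := k.isLt
  simp only [show ∀ q : Fin (N+1), ((q:ℕ) = (i:ℕ)+1 ∧ (q:ℕ)+1 = (k:ℕ)) ↔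
      ((q:ℕ) = (i:ℕ)+1 ∧ (i:ℕ)+1+1 = (k:ℕ)) from fun q => by omega,
    show ∀ q : Fin (N+2), ((i:ℕ)+1 = (q:ℕ) ∧ (k:ℕ) = (q:ℕ)+1) ↔
      ((q:ℕ) = (i:ℕ)+1 ∧ (i:ℕ)+1+1 = (k:ℕ)) from fun q => by omega, ite_and]
  rw [sumA, sumA, dif_pos (show (i:ℕ)+1 < N+2 by omega)]
  by_cases hik : (i:ℕ)+1+1 = (k:ℕ)
  · rw [dif_pos (show (i:ℕ)+1 < N+1 by omega), if_pos hik, if_pos hik]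
    simp only [show (k:ℕ) = (i:ℕ)+1+1 from hik.symm]
    have hx2 : ((i:ℕ):ℝ) ≤ (N:ℝ) := by exact_mod_cast (by omega : (i:ℕ) ≤ N)
    push_cast
    exact_mod_cast S4a (N:ℝ) ((i:ℕ):ℝ) (Nat.cast_nonneg _) hx2
  · split_ifs <;> simp [hik]

lemma hFb (N : ℕ) : Vt N + Fmat N * Vb N = Vb N * Fmat (N + 1) := by
  ext i k
  rw [Matrix.add_apply, Matrix.mul_apply, Matrix.mul_apply]
  simp only [Fmat, conjTranspose_apply, Emat, Vt, Vb, star_ite, star_zero, RCLike.star_def,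
    Complex.conj_ofReal, ite_zero_mul_ite_zero]
  have hi2 := i.isLt
  have hk2 := k.isLt
  simp only [show ∀ q : Fin (N+1), ((q:ℕ) = (i:ℕ)+1 ∧ (q:ℕ) = (k:ℕ)) ↔
      ((q:ℕ) = (i:ℕ)+1 ∧ (i:ℕ)+1 = (k:ℕ)) from fun q => by omega,
    show ∀ q : Fin (N+2), ((i:ℕ) = (q:ℕ) ∧ (k:ℕ) = (q:ℕ)+1) ↔
      ((q:ℕ) = (i:ℕ) ∧ (i:ℕ)+1 = (k:ℕ)) from fun q => by omega, ite_and]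
  rw [sumA, sumA, dif_pos (show (i:ℕ) < N+2 by omega)]
  by_cases hik : (i:ℕ)+1 = (k:ℕ)
  · by_cases h1 : (i:ℕ)+1 < N+1
    · rw [dif_pos h1, if_pos hik, if_pos hik, if_pos hik]
      simp only [show (k:ℕ) = (i:ℕ)+1 from hik.symm]
      have hx1 : ((i:ℕ):ℝ) ≤ (N:ℝ) := by exact_mod_cast (by omega : (i:ℕ) ≤ N)
      push_cast
      exact_mod_cast S4b (N:ℝ) ((i:ℕ):ℝ) (Nat.cast_nonneg _) hx1
    · rw [dif_neg h1, add_zero, if_pos hik, if_pos hik]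
      have hiN : (i:ℕ) = N := by omega
      simp only [show (k:ℕ) = N+1 from by omega, hiN]
      push_cast
      exact_mod_cast S4bz (N:ℝ) (Nat.cast_nonneg _)
  · simp only [if_neg hik]
    split_ifs <;> simp

end EtaAux
end Aux2
section Aux3
open Matrix Complex
open scoped Matrix.Norms.L2Operator
namespace EtaAux

def bigJ (N : ℕ) : Matrix (Fin (N+1) ⊕ Fin (N+1)) (Fin (N+1) ⊕ Fin (N+1)) ℂ :=
  fromBlocks (Hmat N + (1/2 : ℂ) • 1) 0 0 (Hmat N - (1/2 : ℂ) • 1)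

def bigE (N : ℕ) : Matrix (Fin (N+1) ⊕ Fin (N+1)) (Fin (N+1) ⊕ Fin (N+1)) ℂ :=
  fromBlocks (Emat N) 1 0 (Emat N)

def bigF (N : ℕ) : Matrix (Fin (N+1) ⊕ Fin (N+1)) (Fin (N+1) ⊕ Fin (N+1)) ℂ :=
  fromBlocks (Fmat N) 0 1 (Fmat N)

def bigD (N : ℕ) : Matrix ((Fin (N+1) ⊕ Fin (N+1)) ⊕ (Fin (N+1) ⊕ Fin (N+1)))
    ((Fin (N+1) ⊕ Fin (N+1)) ⊕ (Fin (N+1) ⊕ Fin (N+1))) ℂ :=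
  fromBlocks (1 + bigJ N) (bigF N) (bigE N) (1 - bigJ N)

lemma Uplus_iso (N : ℕ) : (Uplus N)ᴴ * Uplus N = 1 := by
  rw [Uplus_eq, conjTranspose_fromRows_eq_fromCols_conjTranspose, fromCols_mul_fromRows,
    VtVb_iso]

lemma interJ (N : ℕ) : bigJ N * Uplus N = Uplus N * Hmat (N + 1) := by
  rw [Uplus_eq, bigJ, fromBlocks_mul_fromRows, fromRows_mul, Matrix.zero_mul, Matrix.zero_mul,
    add_zero, zero_add, hJt, hJb]

lemma interE (N : ℕ) : bigE N * Uplus N = Uplus N * Emat (N + 1) := by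
  rw [Uplus_eq, bigE, fromBlocks_mul_fromRows, fromRows_mul, Matrix.one_mul, Matrix.zero_mul,
    zero_add, hEt, hEb]

lemma interF (N : ℕ) : bigF N * Uplus N = Uplus N * Fmat (N + 1) := by
  rw [Uplus_eq, bigF, fromBlocks_mul_fromRows, fromRows_mul, Matrix.one_mul, Matrix.zero_mul,
    add_zero, hFt, hFb]

lemma Hmat_herm (M : ℕ) : (Hmat M)ᴴ = Hmat M := by
  ext i j
  rw [conjTranspose_apply, Hmat]
  rcases eq_or_ne i j with h | h
  · subst h
    rw [Matrix.diagonal_apply_eq]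
    simp only [RCLike.star_def, map_sub, map_div₀, Complex.conj_natCast, Complex.conj_ofNat]
  · rw [Matrix.diagonal_apply_ne _ (Ne.symm h), Matrix.diagonal_apply_ne _ h, star_zero]

lemma Fmat_conjT (M : ℕ) : (Fmat M)ᴴ = Emat M := by
  rw [Fmat, conjTranspose_conjTranspose]

lemma bigJ_herm (N : ℕ) : (bigJ N)ᴴ = bigJ N := by
  rw [bigJ, fromBlocks_conjTranspose]
  have h1 : ((1/2 : ℂ) • (1 : Matrix (Fin (N+1)) (Fin (N+1)) ℂ))ᴴ = (1/2 : ℂ) • 1 := by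
    rw [conjTranspose_smul, conjTranspose_one]
    norm_num
  rw [conjTranspose_add, conjTranspose_sub, Hmat_herm, h1, conjTranspose_zero]

lemma bigE_conjT (N : ℕ) : (bigE N)ᴴ = bigF N := by
  rw [bigE, bigF, fromBlocks_conjTranspose, conjTranspose_zero, conjTranspose_one, Fmat]

lemma bigF_conjT (N : ℕ) : (bigF N)ᴴ = bigE N := by
  rw [← bigE_conjT, conjTranspose_conjTranspose]

lemma comm_help {p q : Type*} [Fintype p] [Fintype q] [DecidableEq q]
    (Bg : Matrix p p ℂ) (S : Matrix q q ℂ) (V : Matrix p q ℂ)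
    (h1 : Bg * V = V * S) (h2 : Bgᴴ * V = V * Sᴴ) :
    Bg * (V * Vᴴ) = (V * Vᴴ) * Bg := by
  have h3 : Vᴴ * Bg = S * Vᴴ := by
    have h4 := congrArg conjTranspose h2
    rwa [conjTranspose_mul, conjTranspose_mul, conjTranspose_conjTranspose,
      conjTranspose_conjTranspose] at h4
  calc Bg * (V * Vᴴ) = (Bg * V) * Vᴴ := by rw [Matrix.mul_assoc]
    _ = V * (S * Vᴴ) := by rw [h1, Matrix.mul_assoc]
    _ = V * (Vᴴ * Bg) := by rw [h3]
    _ = (V * Vᴴ) * Bg := by rw [Matrix.mul_assoc]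

lemma commJ (N : ℕ) : bigJ N * (Uplus N * (Uplus N)ᴴ) = (Uplus N * (Uplus N)ᴴ) * bigJ N := by
  refine comm_help _ (Hmat (N+1)) _ (interJ N) ?_
  rw [bigJ_herm, Hmat_herm]
  exact interJ N

lemma commE (N : ℕ) : bigE N * (Uplus N * (Uplus N)ᴴ) = (Uplus N * (Uplus N)ᴴ) * bigE N := by
  refine comm_help _ (Emat (N+1)) _ (interE N) ?_
  rw [bigE_conjT, show (Emat (N+1))ᴴ = Fmat (N+1) from rfl]
  exact interF N

lemma commF (N : ℕ) : bigF N * (Uplus N * (Uplus N)ᴴ) = (Uplus N * (Uplus N)ᴴ) * bigF N := by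
  refine comm_help _ (Fmat (N+1)) _ (interF N) ?_
  rw [bigF_conjT, Fmat_conjT]
  exact interE N

/-! ### norm lemmas -/

lemma norm_one_le (n : Type*) [Fintype n] [DecidableEq n] : ‖(1 : Matrix n n ℂ)‖ ≤ 1 := by
  have h1 : (Matrix.toEuclideanCLM (n := n) (𝕜 := ℂ)) (1 : Matrix n n ℂ) = 1 := _root_.map_one _
  rw [Matrix.cstar_norm_def, h1, ContinuousLinearMap.one_def]
  exact ContinuousLinearMap.norm_id_le

lemma norm_conj_le {m n : Type*} [Fintype m] [Fintype n] [DecidableEq m] [DecidableEq n]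
    (W : Matrix m n ℂ) (hW : Wᴴ * W = 1) (M : Matrix m m ℂ) :
    ‖Wᴴ * M * W‖ ≤ ‖M‖ := by
  have hw : ‖W‖ ≤ 1 := by
    have h2 := Matrix.l2_opNorm_conjTranspose_mul_self W
    rw [hW] at h2
    nlinarith [norm_nonneg W, norm_one_le n]
  have hwt : ‖Wᴴ‖ ≤ 1 := by rw [Matrix.l2_opNorm_conjTranspose]; exact hw
  calc ‖Wᴴ * M * W‖ ≤ ‖Wᴴ * M‖ * ‖W‖ := Matrix.l2_opNorm_mul _ _
    _ ≤ (‖Wᴴ‖ * ‖M‖) * ‖W‖ :=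
        mul_le_mul_of_nonneg_right (Matrix.l2_opNorm_mul _ _) (norm_nonneg _)
    _ ≤ (1 * ‖M‖) * 1 :=
        mul_le_mul (mul_le_mul_of_nonneg_right hwt (norm_nonneg M)) hw (norm_nonneg W)
          (by positivity)
    _ = ‖M‖ := by ring

lemma eucl_normsq {κ : Type*} [Fintype κ] (y : EuclideanSpace ℂ κ) :
    ‖y‖^2 = ∑ i, ‖y i‖^2 := by
  rw [EuclideanSpace.norm_eq, Real.sq_sqrt (by positivity)]

lemma norm_blockDiag_le {m : Type*} [Fintype m] [DecidableEq m] (M : Matrix m m ℂ) :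
    ‖(fromBlocks M 0 0 M : Matrix (m ⊕ m) (m ⊕ m) ℂ)‖ ≤ ‖M‖ := by
  rw [Matrix.l2_opNorm_def]
  refine ContinuousLinearMap.opNorm_le_bound _ (norm_nonneg _) fun x => ?_
  simp only [LinearEquiv.trans_apply, LinearMap.coe_toContinuousLinearMap']
  rw [Matrix.toEuclideanLin_apply]
  set x₁ : EuclideanSpace ℂ m := (WithLp.equiv 2 (m → ℂ)).symm (fun i => x (Sum.inl i)) with hx₁
  set x₂ : EuclideanSpace ℂ m := (WithLp.equiv 2 (m → ℂ)).symm (fun i => x (Sum.inr i)) with hx₂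
  have hmv : (fromBlocks M 0 0 M) *ᵥ ((WithLp.equiv 2 ((m ⊕ m) → ℂ)) x) =
      Sum.elim (M *ᵥ fun i => x (Sum.inl i)) (M *ᵥ fun i => x (Sum.inr i)) := by
    rw [fromBlocks_mulVec]
    simp only [Matrix.zero_mulVec, add_zero, zero_add]
    rfl
  rw [show x.ofLp = WithLp.equiv 2 ((m ⊕ m) → ℂ) x from rfl, hmv]
  have hxs : ‖x‖^2 = ‖x₁‖^2 + ‖x₂‖^2 := by
    rw [eucl_normsq x, eucl_normsq x₁, eucl_normsq x₂, Fintype.sum_sum_type]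
    rfl
  have hys : ‖(WithLp.equiv 2 ((m ⊕ m) → ℂ)).symm
      (Sum.elim (M *ᵥ fun i => x (Sum.inl i)) (M *ᵥ fun i => x (Sum.inr i)))‖^2 =
      ‖(WithLp.equiv 2 (m → ℂ)).symm (M *ᵥ fun i => x (Sum.inl i))‖^2 +
      ‖(WithLp.equiv 2 (m → ℂ)).symm (M *ᵥ fun i => x (Sum.inr i))‖^2 := by
    rw [eucl_normsq, eucl_normsq, eucl_normsq, Fintype.sum_sum_type]
    rfl
  have b1 : ‖(WithLp.equiv 2 (m → ℂ)).symm (M *ᵥ fun i => x (Sum.inl i))‖ ≤ ‖M‖ * ‖x₁‖ :=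
    Matrix.l2_opNorm_mulVec M x₁
  have b2 : ‖(WithLp.equiv 2 (m → ℂ)).symm (M *ᵥ fun i => x (Sum.inr i))‖ ≤ ‖M‖ * ‖x₂‖ :=
    Matrix.l2_opNorm_mulVec M x₂
  have key : ‖(WithLp.equiv 2 ((m ⊕ m) → ℂ)).symm
      (Sum.elim (M *ᵥ fun i => x (Sum.inl i)) (M *ᵥ fun i => x (Sum.inr i)))‖^2 ≤
      (‖M‖ * ‖x‖)^2 := by
    have s1 := pow_le_pow_left₀ (norm_nonneg _) b1 2
    have s2 := pow_le_pow_left₀ (norm_nonneg _) b2 2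
    rw [hys]
    nlinarith [hxs, sq_nonneg ‖M‖]
  calc ‖(WithLp.equiv 2 ((m ⊕ m) → ℂ)).symm
        (Sum.elim (M *ᵥ fun i => x (Sum.inl i)) (M *ᵥ fun i => x (Sum.inr i)))‖
      = Real.sqrt (‖(WithLp.equiv 2 ((m ⊕ m) → ℂ)).symm
        (Sum.elim (M *ᵥ fun i => x (Sum.inl i)) (M *ᵥ fun i => x (Sum.inr i)))‖^2) :=
        (Real.sqrt_sq (norm_nonneg _)).symm
    _ ≤ Real.sqrt ((‖M‖ * ‖x‖)^2) := Real.sqrt_le_sqrt key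
    _ = ‖M‖ * ‖x‖ := Real.sqrt_sq (by positivity)

/-- swap the middle factors -/
def σe (m : Type*) : ((m ⊕ m) ⊕ (m ⊕ m)) ≃ ((m ⊕ m) ⊕ (m ⊕ m)) where
  toFun := Sum.elim (Sum.elim (fun x => Sum.inl (Sum.inl x)) (fun x => Sum.inr (Sum.inl x)))
    (Sum.elim (fun x => Sum.inl (Sum.inr x)) (fun x => Sum.inr (Sum.inr x)))
  invFun := Sum.elim (Sum.elim (fun x => Sum.inl (Sum.inl x)) (fun x => Sum.inr (Sum.inl x)))
    (Sum.elim (fun x => Sum.inl (Sum.inr x)) (fun x => Sum.inr (Sum.inr x)))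
  left_inv := by rintro ((x|x)|(x|x)) <;> rfl
  right_inv := by rintro ((x|x)|(x|x)) <;> rfl

lemma blockswap {m : Type*} (X Y Z U : Matrix m m ℂ) :
    fromBlocks (fromBlocks X 0 0 X) (fromBlocks Y 0 0 Y) (fromBlocks Z 0 0 Z)
        (fromBlocks U 0 0 U) =
      (fromBlocks (fromBlocks X Y Z U) 0 0 (fromBlocks X Y Z U)).submatrix (σe m) (σe m) := by
  ext r c
  rcases r with (r|r)|(r|r) <;> rcases c with (c|c)|(c|c) <;> rfl

def Qmat {m : Type*} [DecidableEq m] (σ : m ≃ m) : Matrix m m ℂ := fun x i =>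
  if x = σ i then 1 else 0

lemma Qmat_iso {m : Type*} [Fintype m] [DecidableEq m] (σ : m ≃ m) :
    (Qmat σ)ᴴ * Qmat σ = 1 := by
  ext i j
  rw [Matrix.mul_apply]
  simp only [conjTranspose_apply, Qmat, star_ite, star_one, star_zero,
    ite_zero_mul_ite_zero]
  rw [Finset.sum_eq_single (σ i)]
  · rcases eq_or_ne i j with h | h
    · subst h
      rw [if_pos ⟨rfl, rfl⟩, Matrix.one_apply_eq, one_mul]
    · rw [if_neg (fun hh => h (σ.injective hh.2)), Matrix.one_apply_ne h]
  · intro p _ hp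
    exact if_neg (fun hh => hp hh.1)
  · intro h; exact absurd (Finset.mem_univ _) h

lemma Qmat_conj {m : Type*} [Fintype m] [DecidableEq m] (σ : m ≃ m) (X : Matrix m m ℂ) :
    (Qmat σ)ᴴ * X * Qmat σ = X.submatrix ⇑σ ⇑σ := by
  ext i j
  rw [Matrix.mul_apply]
  simp only [Matrix.mul_apply, conjTranspose_apply, Qmat, star_ite, star_one, star_zero,
    Matrix.submatrix_apply]
  rw [Finset.sum_eq_single (σ j)]
  · rw [if_pos rfl, mul_one, Finset.sum_eq_single (σ i)]
    · rw [if_pos rfl, one_mul]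
    · intro p _ hp
      rw [if_neg hp, zero_mul]
    · intro h; exact absurd (Finset.mem_univ _) h
  · intro q _ hq
    rw [if_neg hq, mul_zero]
  · intro h; exact absurd (Finset.mem_univ _) h

lemma norm_submatrix_le {m : Type*} [Fintype m] [DecidableEq m] (σ : m ≃ m)
    (X : Matrix m m ℂ) : ‖X.submatrix ⇑σ ⇑σ‖ ≤ ‖X‖ := by
  rw [← Qmat_conj σ X]
  exact norm_conj_le _ (Qmat_iso σ) X

end EtaAux
end Aux3
section Aux4
open Matrix Complex
namespace EtaAux

lemma choose_T1 (N : ℕ) (i : Fin (N+1)) :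
    Real.sqrt ((((i:ℕ):ℝ)+1) / ((N:ℝ) + 1)) *
      Real.sqrt (((N+1).choose ((i:ℕ)+1) : ℕ)) = Real.sqrt ((N.choose (i:ℕ) : ℕ)) := by
  rw [← Real.sqrt_mul (by positivity)]
  congr 1
  have h := Nat.add_one_mul_choose_eq N (i:ℕ)
  have h' : ((N:ℝ)+1) * (N.choose (i:ℕ) : ℝ) =
      ((N+1).choose ((i:ℕ)+1) : ℝ) * (((i:ℕ):ℝ)+1) := by exact_mod_cast h
  have hN1 : ((N:ℝ)+1) ≠ 0 := by positivity
  rw [div_mul_eq_mul_div, div_eq_iff hN1]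
  linarith [h']

lemma choose_T2 (N : ℕ) (i : Fin (N+1)) :
    Real.sqrt (((N:ℝ) + 1 - ((i:ℕ):ℝ)) / ((N:ℝ) + 1)) *
      Real.sqrt (((N+1).choose (i:ℕ) : ℕ)) = Real.sqrt ((N.choose (i:ℕ) : ℕ)) := by
  have hiN : (i:ℕ) ≤ N := by omega
  rw [← Real.sqrt_mul (by
    apply div_nonneg _ (by positivity)
    have : ((i:ℕ):ℝ) ≤ (N:ℝ) := by exact_mod_cast hiN
    linarith)]
  congr 1
  have h := Nat.choose_mul_succ_eq N (i:ℕ)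
  -- N.choose i * (N + 1) = (N + 1).choose i * (N + 1 - i)
  have h' : (N.choose (i:ℕ) : ℝ) * ((N:ℝ)+1) =
      ((N+1).choose (i:ℕ) : ℝ) * ((N:ℝ) + 1 - ((i:ℕ):ℝ)) := by
    have h2 := congrArg (Nat.cast (R := ℝ)) h
    push_cast [Nat.cast_sub (by omega : (i:ℕ) ≤ N + 1)] at h2
    linarith [h2]
  have hN1 : ((N:ℝ)+1) ≠ 0 := by positivity
  rw [div_mul_eq_mul_div, div_eq_iff hN1]
  linarith [h']

lemma mulVec_bloch (N : ℕ) (φ θ : ℝ) :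
    Uplus N *ᵥ blochVec (N+1) φ θ =
      Sum.elim
        ((Complex.exp (-Complex.I * (φ:ℂ) / 2) * ((Real.sin (θ/2) : ℝ) : ℂ)) • blochVec N φ θ)
        ((Complex.exp (Complex.I * (φ:ℂ) / 2) * ((Real.cos (θ/2) : ℝ) : ℂ)) • blochVec N φ θ) := by
  funext r
  rcases r with i | i
  · show ∑ q : Fin (N+2), Uplus N (Sum.inl i) q * blochVec (N+1) φ θ q = _
    simp only [Uplus, Sum.elim_inl, ite_mul, zero_mul]
    simp only [show ∀ q : Fin (N+2), ((i:ℕ)+1 = (q:ℕ)) ↔ ((q:ℕ) = (i:ℕ)+1) from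
      fun q => eq_comm]
    rw [sumA, dif_pos (show (i:ℕ)+1 < N+2 by omega)]
    simp only [Sum.elim_inl, Pi.smul_apply, smul_eq_mul, blochVec]
    have hexp : Complex.exp (-Complex.I * ((((i:ℕ):ℂ) + 1) - ((N:ℂ)+1)/2) * (φ:ℂ)) =
        Complex.exp (-Complex.I * (φ:ℂ)/2) *
          Complex.exp (-Complex.I * (((i:ℕ):ℂ) - (N:ℂ)/2) * (φ:ℂ)) := by
      rw [← Complex.exp_add]
      congr 1
      ring
    have hch := choose_T1 N i
    have hchC : ((Real.sqrt ((((i:ℕ):ℝ)+1) / ((N:ℝ) + 1)) : ℝ) : ℂ) *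
        ((Real.sqrt (((N+1).choose ((i:ℕ)+1) : ℕ)) : ℝ) : ℂ) =
        ((Real.sqrt ((N.choose (i:ℕ) : ℕ)) : ℝ) : ℂ) := by exact_mod_cast hch
    push_cast
    rw [pow_succ, hexp]
    linear_combination (Complex.exp (-Complex.I * (φ:ℂ)/2) *
      Complex.exp (-Complex.I * (((i:ℕ):ℂ) - (N:ℂ)/2) * (φ:ℂ)) *
      (Complex.sin ((θ:ℂ)/2))^(i:ℕ) * Complex.sin ((θ:ℂ)/2) *
      (Complex.cos ((θ:ℂ)/2))^(N - (i:ℕ))) * hchC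
  · show ∑ q : Fin (N+2), Uplus N (Sum.inr i) q * blochVec (N+1) φ θ q = _
    simp only [Uplus, Sum.elim_inr, ite_mul, zero_mul]
    simp only [show ∀ q : Fin (N+2), ((i:ℕ) = (q:ℕ)) ↔ ((q:ℕ) = (i:ℕ)) from
      fun q => eq_comm]
    rw [sumA, dif_pos (show (i:ℕ) < N+2 by omega)]
    simp only [Sum.elim_inr, Pi.smul_apply, smul_eq_mul, blochVec]
    have hexp : Complex.exp (-Complex.I * (((i:ℕ):ℂ) - ((N:ℂ)+1)/2) * (φ:ℂ)) =
        Complex.exp (Complex.I * (φ:ℂ)/2) *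
          Complex.exp (-Complex.I * (((i:ℕ):ℂ) - (N:ℂ)/2) * (φ:ℂ)) := by
      rw [← Complex.exp_add]
      congr 1
      ring
    have hch := choose_T2 N i
    have hchC : ((Real.sqrt (((N:ℝ) + 1 - ((i:ℕ):ℝ)) / ((N:ℝ) + 1)) : ℝ) : ℂ) *
        ((Real.sqrt (((N+1).choose (i:ℕ) : ℕ)) : ℝ) : ℂ) =
        ((Real.sqrt ((N.choose (i:ℕ) : ℕ)) : ℝ) : ℂ) := by exact_mod_cast hch
    push_cast
    rw [show (N + 1 - (i:ℕ)) = (N - (i:ℕ)) + 1 from by omega, pow_succ, hexp]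
    linear_combination (Complex.exp (Complex.I * (φ:ℂ)/2) *
      Complex.exp (-Complex.I * (((i:ℕ):ℂ) - (N:ℂ)/2) * (φ:ℂ)) *
      (Complex.sin ((θ:ℂ)/2))^(i:ℕ) * Complex.cos ((θ:ℂ)/2) *
      (Complex.cos ((θ:ℂ)/2))^(N - (i:ℕ))) * hchC

lemma psi_eq (N : ℕ) (a : Matrix (Fin (N + 1)) (Fin (N + 1)) ℂ) (φ θ : ℝ) :
    psiState (N + 1) (etaPlus N a) φ θ = psiState N a φ θ := by
  rw [psiState, psiState, etaPlus, ← Matrix.mulVec_mulVec, ← Matrix.mulVec_mulVec,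
    Matrix.dotProduct_mulVec, ← Matrix.star_mulVec, mulVec_bloch]
  set u := blochVec N φ θ with hu
  set α := Complex.exp (-Complex.I * (φ:ℂ) / 2) * ((Real.sin (θ/2) : ℝ) : ℂ) with hα
  set β := Complex.exp (Complex.I * (φ:ℂ) / 2) * ((Real.cos (θ/2) : ℝ) : ℂ) with hβ
  rw [show tensorOne N a = fromBlocks a 0 0 a from rfl, fromBlocks_mulVec]
  simp only [Sum.elim_comp_inl, Sum.elim_comp_inr, Matrix.zero_mulVec, add_zero, zero_add,
    Matrix.mulVec_smul, smul_zero]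
  have hstar : star (Sum.elim (α • u) (β • u)) = Sum.elim (star (α • u)) (star (β • u)) := by
    funext r; cases r <;> rfl
  rw [hstar, sumElim_dotProduct_sumElim]
  simp only [star_smul, smul_dotProduct, dotProduct_smul, smul_eq_mul]
  have hαα : star α * α = ((Real.sin (θ/2) : ℝ) : ℂ) * ((Real.sin (θ/2) : ℝ) : ℂ) := by
    have h1 : (starRingEnd ℂ) (Complex.exp (-Complex.I * (φ:ℂ) / 2)) =
        Complex.exp (Complex.I * (φ:ℂ) / 2) := by
      rw [← Complex.exp_conj]
      congr 1
      simp only [map_div₀, map_neg, _root_.map_mul, Complex.conj_I, Complex.conj_ofReal,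
        Complex.conj_ofNat]
      try ring
    have h2 : Complex.exp (Complex.I * (φ:ℂ)/2) * Complex.exp (-Complex.I * (φ:ℂ)/2) = 1 := by
      rw [← Complex.exp_add, show Complex.I * (φ:ℂ)/2 + -Complex.I * (φ:ℂ)/2 = 0 from by ring,
        Complex.exp_zero]
    rw [hα, RCLike.star_def, _root_.map_mul, h1, Complex.conj_ofReal]
    linear_combination ((Real.sin (θ/2) : ℝ) : ℂ) * ((Real.sin (θ/2) : ℝ) : ℂ) * h2
  have hββ : star β * β = ((Real.cos (θ/2) : ℝ) : ℂ) * ((Real.cos (θ/2) : ℝ) : ℂ) := by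
    have h1 : (starRingEnd ℂ) (Complex.exp (Complex.I * (φ:ℂ) / 2)) =
        Complex.exp (-Complex.I * (φ:ℂ) / 2) := by
      rw [← Complex.exp_conj]
      congr 1
      simp only [map_div₀, map_neg, _root_.map_mul, Complex.conj_I, Complex.conj_ofReal,
        Complex.conj_ofNat]
      try ring
    have h2 : Complex.exp (-Complex.I * (φ:ℂ)/2) * Complex.exp (Complex.I * (φ:ℂ)/2) = 1 := by
      rw [← Complex.exp_add, show -Complex.I * (φ:ℂ)/2 + Complex.I * (φ:ℂ)/2 = 0 from by ring,
        Complex.exp_zero]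
    rw [hβ, RCLike.star_def, _root_.map_mul, h1, Complex.conj_ofReal]
    linear_combination ((Real.cos (θ/2) : ℝ) : ℂ) * ((Real.cos (θ/2) : ℝ) : ℂ) * h2
  have hsum : star α * α + star β * β = 1 := by
    rw [hαα, hββ, ← Complex.ofReal_mul, ← Complex.ofReal_mul, ← Complex.ofReal_add]
    rw [show Real.sin (θ/2) * Real.sin (θ/2) + Real.cos (θ/2) * Real.cos (θ/2) = 1 from by
      have := Real.sin_sq_add_cos_sq (θ/2)
      nlinarith [this]]
    exact Complex.ofReal_one
  linear_combination (star u ⬝ᵥ a *ᵥ u) * hsum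

end EtaAux
end Aux4
section Aux5
open Matrix Complex
open scoped Matrix.Norms.L2Operator
namespace EtaAux

lemma opNorm_eq {n : Type*} [Fintype n] [DecidableEq n] (M : Matrix n n ℂ) :
    opNorm M = ‖M‖ := (Matrix.cstar_norm_def M).symm

lemma fromBlocks_sub {l m n o : Type*} (A : Matrix n l ℂ) (B : Matrix n m ℂ) (C : Matrix o l ℂ)
    (D : Matrix o m ℂ) (A' : Matrix n l ℂ) (B' : Matrix n m ℂ) (C' : Matrix o l ℂ)
    (D' : Matrix o m ℂ) :
    fromBlocks A B C D - fromBlocks A' B' C' D' =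
      fromBlocks (A - A') (B - B') (C - C') (D - D') := by
  ext (i|i) (j|j) <;> simp [Matrix.sub_apply]

lemma dirac_comm_blocks (N : ℕ) (a : Matrix (Fin (N + 1)) (Fin (N + 1)) ℂ) :
    DiracOp N * tensorOne N a - tensorOne N a * DiracOp N =
      fromBlocks (Hmat N * a - a * Hmat N) (Fmat N * a - a * Fmat N)
        (Emat N * a - a * Emat N) (a * Hmat N - Hmat N * a) := by
  rw [DiracOp, show tensorOne N a = fromBlocks a 0 0 a from rfl, fromBlocks_multiply,
    fromBlocks_multiply, fromBlocks_sub]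
  simp only [Matrix.mul_zero, Matrix.zero_mul, add_zero, zero_add]
  have c1 : (1 + Hmat N) * a - a * (1 + Hmat N) = Hmat N * a - a * Hmat N := by
    rw [add_mul, mul_add, Matrix.one_mul, Matrix.mul_one]
    abel
  have c4 : (1 - Hmat N) * a - a * (1 - Hmat N) = a * Hmat N - Hmat N * a := by
    rw [sub_mul, mul_sub, Matrix.one_mul, Matrix.mul_one]
    abel
  rw [c1, c4]

lemma commJ_blocks (N : ℕ) (a : Matrix (Fin (N + 1)) (Fin (N + 1)) ℂ) :
    bigJ N * tensorOne N a - tensorOne N a * bigJ N =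
      fromBlocks (Hmat N * a - a * Hmat N) 0 0 (Hmat N * a - a * Hmat N) := by
  rw [bigJ, show tensorOne N a = fromBlocks a 0 0 a from rfl, fromBlocks_multiply,
    fromBlocks_multiply, fromBlocks_sub]
  simp only [Matrix.mul_zero, Matrix.zero_mul, add_zero, zero_add, sub_self, sub_zero]
  have c1 : (Hmat N + (1/2 : ℂ) • 1) * a - a * (Hmat N + (1/2 : ℂ) • 1) =
      Hmat N * a - a * Hmat N := by
    rw [add_mul, mul_add, smul_mul_assoc, mul_smul_comm, Matrix.one_mul, Matrix.mul_one]
    abel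
  have c2 : (Hmat N - (1/2 : ℂ) • 1) * a - a * (Hmat N - (1/2 : ℂ) • 1) =
      Hmat N * a - a * Hmat N := by
    rw [sub_mul, mul_sub, smul_mul_assoc, mul_smul_comm, Matrix.one_mul, Matrix.mul_one]
    abel
  rw [c1, c2]

lemma commE_blocks (N : ℕ) (a : Matrix (Fin (N + 1)) (Fin (N + 1)) ℂ) :
    bigE N * tensorOne N a - tensorOne N a * bigE N =
      fromBlocks (Emat N * a - a * Emat N) 0 0 (Emat N * a - a * Emat N) := by
  rw [bigE, show tensorOne N a = fromBlocks a 0 0 a from rfl, fromBlocks_multiply,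
    fromBlocks_multiply, fromBlocks_sub]
  simp only [Matrix.mul_zero, Matrix.zero_mul, Matrix.mul_one, Matrix.one_mul, add_zero,
    zero_add, sub_self]

lemma commF_blocks (N : ℕ) (a : Matrix (Fin (N + 1)) (Fin (N + 1)) ℂ) :
    bigF N * tensorOne N a - tensorOne N a * bigF N =
      fromBlocks (Fmat N * a - a * Fmat N) 0 0 (Fmat N * a - a * Fmat N) := by
  rw [bigF, show tensorOne N a = fromBlocks a 0 0 a from rfl, fromBlocks_multiply,
    fromBlocks_multiply, fromBlocks_sub]
  simp only [Matrix.mul_zero, Matrix.zero_mul, Matrix.mul_one, Matrix.one_mul, add_zero,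
    zero_add, sub_self]

lemma comm_bigD (N : ℕ) (a : Matrix (Fin (N + 1)) (Fin (N + 1)) ℂ) :
    bigD N * fromBlocks (tensorOne N a) 0 0 (tensorOne N a) -
        fromBlocks (tensorOne N a) 0 0 (tensorOne N a) * bigD N =
      (fromBlocks (DiracOp N * tensorOne N a - tensorOne N a * DiracOp N) 0 0
        (DiracOp N * tensorOne N a - tensorOne N a * DiracOp N)).submatrix
          (σe (Fin (N+1))) (σe (Fin (N+1))) := by
  rw [dirac_comm_blocks, ← blockswap, bigD, fromBlocks_multiply, fromBlocks_multiply,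
    fromBlocks_sub]
  simp only [Matrix.mul_zero, Matrix.zero_mul, add_zero, zero_add]
  have c1 : (1 + bigJ N) * tensorOne N a - tensorOne N a * (1 + bigJ N) =
      bigJ N * tensorOne N a - tensorOne N a * bigJ N := by
    rw [add_mul, mul_add, Matrix.one_mul, Matrix.mul_one]
    abel
  have c4 : (1 - bigJ N) * tensorOne N a - tensorOne N a * (1 - bigJ N) =
      -(bigJ N * tensorOne N a - tensorOne N a * bigJ N) := by
    rw [sub_mul, mul_sub, Matrix.one_mul, Matrix.mul_one]
    abel
  rw [c1, c4, commJ_blocks, commE_blocks, commF_blocks]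
  have c5 : -(fromBlocks (Hmat N * a - a * Hmat N) 0 0 (Hmat N * a - a * Hmat N) :
      Matrix (Fin (N+1) ⊕ Fin (N+1)) (Fin (N+1) ⊕ Fin (N+1)) ℂ) =
      fromBlocks (a * Hmat N - Hmat N * a) 0 0 (a * Hmat N - Hmat N * a) := by
    rw [Matrix.fromBlocks_neg]
    simp only [neg_zero, neg_sub]
  rw [c5]

end EtaAux
end Aux5
section Main
open Matrix Complex
open scoped Matrix.Norms.L2Operator

theorem etaPlus_compat (N : ℕ) (hN : 1 ≤ N) (a : Matrix (Fin (N + 1)) (Fin (N + 1)) ℂ)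
    (φ θ : ℝ) :
    psiState (N + 1) (etaPlus N a) φ θ = psiState N a φ θ ∧
    opNorm (DiracOp (N + 1) * tensorOne (N + 1) (etaPlus N a) -
        tensorOne (N + 1) (etaPlus N a) * DiracOp (N + 1)) ≤
      opNorm (DiracOp N * tensorOne N a - tensorOne N a * DiracOp N) := by
  constructor
  · exact EtaAux.psi_eq N a φ θ
  · set V := Uplus N with hV
    set b := tensorOne N a with hb
    set W : Matrix ((Fin (N+1) ⊕ Fin (N+1)) ⊕ (Fin (N+1) ⊕ Fin (N+1)))
        (Fin (N+2) ⊕ Fin (N+2)) ℂ := fromBlocks V 0 0 V with hW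
    have hWc : Wᴴ = fromBlocks Vᴴ 0 0 Vᴴ := by
      rw [hW, fromBlocks_conjTranspose, conjTranspose_zero]
    have hVV : Vᴴ * V = 1 := EtaAux.Uplus_iso N
    have hWW : Wᴴ * W = 1 := by
      rw [hWc, hW, fromBlocks_multiply]
      simp only [Matrix.mul_zero, Matrix.zero_mul, add_zero, zero_add, hVV]
      exact Matrix.fromBlocks_one
    set A4 : Matrix ((Fin (N+1) ⊕ Fin (N+1)) ⊕ (Fin (N+1) ⊕ Fin (N+1)))
        ((Fin (N+1) ⊕ Fin (N+1)) ⊕ (Fin (N+1) ⊕ Fin (N+1))) ℂ := fromBlocks b 0 0 b with hA4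
    have hWDW : Wᴴ * EtaAux.bigD N * W = DiracOp (N + 1) := by
      have e11 : Vᴴ * ((1 + EtaAux.bigJ N) * V) = 1 + Hmat (N+1) := by
        rw [Matrix.add_mul, Matrix.one_mul, EtaAux.interJ, Matrix.mul_add, hVV,
          ← Matrix.mul_assoc, hVV, Matrix.one_mul]
      have e12 : Vᴴ * (EtaAux.bigF N * V) = Fmat (N+1) := by
        rw [EtaAux.interF, ← Matrix.mul_assoc, hVV, Matrix.one_mul]
      have e21 : Vᴴ * (EtaAux.bigE N * V) = Emat (N+1) := by
        rw [EtaAux.interE, ← Matrix.mul_assoc, hVV, Matrix.one_mul]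
      have e22 : Vᴴ * ((1 - EtaAux.bigJ N) * V) = 1 - Hmat (N+1) := by
        rw [Matrix.sub_mul, Matrix.one_mul, EtaAux.interJ, Matrix.mul_sub, hVV,
          ← Matrix.mul_assoc, hVV, Matrix.one_mul]
      rw [Matrix.mul_assoc, hW, hWc, EtaAux.bigD, fromBlocks_multiply, fromBlocks_multiply]
      simp only [Matrix.mul_zero, Matrix.zero_mul, add_zero, zero_add]
      rw [e11, e12, e21, e22, DiracOp]
    have hWTW : Wᴴ * A4 * W = tensorOne (N + 1) (etaPlus N a) := by
      rw [Matrix.mul_assoc, hW, hWc, hA4, fromBlocks_multiply, fromBlocks_multiply]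
      simp only [Matrix.mul_zero, Matrix.zero_mul, add_zero, zero_add]
      rw [← Matrix.mul_assoc]
      rfl
    have hP4 : EtaAux.bigD N * (W * Wᴴ) = (W * Wᴴ) * EtaAux.bigD N := by
      have hWWc : W * Wᴴ = fromBlocks (V * Vᴴ) 0 0 (V * Vᴴ) := by
        rw [hW, hWc, fromBlocks_multiply]
        simp only [Matrix.mul_zero, Matrix.zero_mul, add_zero, zero_add]
      rw [hWWc, EtaAux.bigD, fromBlocks_multiply, fromBlocks_multiply]
      simp only [Matrix.mul_zero, Matrix.zero_mul, add_zero, zero_add]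
      rw [Matrix.add_mul, Matrix.mul_add, Matrix.one_mul, Matrix.mul_one, EtaAux.commJ,
        Matrix.sub_mul, Matrix.mul_sub, Matrix.one_mul, Matrix.mul_one, EtaAux.commJ,
        EtaAux.commE, EtaAux.commF]
    have key : ∀ X Y : Matrix ((Fin (N+1) ⊕ Fin (N+1)) ⊕ (Fin (N+1) ⊕ Fin (N+1)))
        ((Fin (N+1) ⊕ Fin (N+1)) ⊕ (Fin (N+1) ⊕ Fin (N+1))) ℂ,
        X * (W * Wᴴ) = (W * Wᴴ) * X →
        (Wᴴ * X * W) * (Wᴴ * Y * W) = Wᴴ * (X * Y) * W := by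
      intro X Y hX
      have h1 : (Wᴴ * X * W) * (Wᴴ * Y * W) = Wᴴ * (X * (W * Wᴴ)) * (Y * W) := by
        simp only [Matrix.mul_assoc]
      rw [h1, hX]
      simp only [← Matrix.mul_assoc]
      rw [hWW, Matrix.one_mul]
    have key2 : ∀ X Y : Matrix ((Fin (N+1) ⊕ Fin (N+1)) ⊕ (Fin (N+1) ⊕ Fin (N+1)))
        ((Fin (N+1) ⊕ Fin (N+1)) ⊕ (Fin (N+1) ⊕ Fin (N+1))) ℂ,
        Y * (W * Wᴴ) = (W * Wᴴ) * Y →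
        (Wᴴ * X * W) * (Wᴴ * Y * W) = Wᴴ * (X * Y) * W := by
      intro X Y hY
      have h1 : (Wᴴ * X * W) * (Wᴴ * Y * W) = Wᴴ * X * ((W * Wᴴ) * (Y * W)) := by
        simp only [Matrix.mul_assoc]
      have hWWW : (W * Wᴴ) * W = W := by rw [Matrix.mul_assoc, hWW, Matrix.mul_one]
      rw [h1, ← Matrix.mul_assoc (W * Wᴴ) Y W, ← hY, Matrix.mul_assoc Y (W * Wᴴ) W, hWWW]
      simp only [← Matrix.mul_assoc]
    have hcomm : DiracOp (N+1) * tensorOne (N+1) (etaPlus N a) -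
        tensorOne (N+1) (etaPlus N a) * DiracOp (N+1) =
        Wᴴ * (EtaAux.bigD N * A4 - A4 * EtaAux.bigD N) * W := by
      rw [← hWDW, ← hWTW, key _ _ hP4, key2 _ _ hP4, Matrix.mul_sub, Matrix.sub_mul]
    rw [EtaAux.opNorm_eq, EtaAux.opNorm_eq, hcomm]
    calc ‖Wᴴ * (EtaAux.bigD N * A4 - A4 * EtaAux.bigD N) * W‖
        ≤ ‖EtaAux.bigD N * A4 - A4 * EtaAux.bigD N‖ := EtaAux.norm_conj_le W hWW _
      _ = ‖(fromBlocks (DiracOp N * b - b * DiracOp N) 0 0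
            (DiracOp N * b - b * DiracOp N)).submatrix
            (EtaAux.σe (Fin (N+1))) (EtaAux.σe (Fin (N+1)))‖ := by
          rw [hA4, hb, EtaAux.comm_bigD]
      _ ≤ ‖fromBlocks (DiracOp N * b - b * DiracOp N) 0 0
            (DiracOp N * b - b * DiracOp N)‖ := EtaAux.norm_submatrix_le _ _
      _ ≤ ‖DiracOp N * b - b * DiracOp N‖ := EtaAux.norm_blockDiag_le _
end Main
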